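/- Let A and D be positive integers, i a nonnegative integer, and k an integer such that the residual Δ = k·A − i·D satisfies −A < Δ < 0. Then k ≥ 0, and: if |Δ + A| < |Δ| then k + 1 is a skew-compensated clock of i (i.e., |(k+1)·A − i·D| ≤ |m·A − i·D| for every nonnegative integer m), while if |Δ + A| ≥ |Δ| then k is a skew-compensated clock of i (i.e., |k·A − i·D| ≤ |m·A − i·D| for every nonnegative integer m). -/
import Mathlib

/-- If the residual `Δ = k·A - i·D` satisfies `-A < Δ < 0`, then
`k ≥ 0`; if `|Δ + A| < |Δ|` then `k + 1` is a skew-compensated clock of `i`,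
and if `|Δ + A| ≥ |Δ|` then `k` is a skew-compensated clock of `i`. -/
theorem scc_case_neg_residual (A D i k : ℤ) (hA : 0 < A) (hD : 0 < D)
    (hi : 0 ≤ i) (hk1 : -A < k * A - i * D) (hk2 : k * A - i * D < 0) :
    0 ≤ k ∧
    (|(k * A - i * D) + A| < |k * A - i * D| →
      ∀ m : ℤ, 0 ≤ m → |(k + 1) * A - i * D| ≤ |m * A - i * D|) ∧
    (|k * A - i * D| ≤ |(k * A - i * D) + A| →
      ∀ m : ℤ, 0 ≤ m → |k * A - i * D| ≤ |m * A - i * D|) := by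
  have hiD : 0 ≤ i * D := mul_nonneg hi hD.le
  have hk0 : 0 ≤ k := by
    by_contra h
    push_neg at h
    have : k ≤ -1 := by omega
    have := mul_le_mul_of_nonneg_right this hA.le
    linarith
  have habsΔ : |k * A - i * D| = -(k * A - i * D) := abs_of_neg hk2
  have habsΔA : |(k * A - i * D) + A| = (k * A - i * D) + A := abs_of_pos (by linarith)
  refine ⟨hk0, ?_, ?_⟩
  · intro h m hm
    rcases le_or_gt m k with hmk | hmk
    · have h1 : 0 ≤ (k - m) * A := mul_nonneg (by linarith) hA.le
      have h2 : m * A - i * D < 0 := by nlinarith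
      rw [abs_of_neg h2]
      have : (k + 1) * A - i * D = (k * A - i * D) + A := by ring
      rw [this, habsΔA]
      rw [habsΔ, habsΔA] at h
      nlinarith
    · have h1 : 0 ≤ (m - k - 1) * A := mul_nonneg (by linarith) hA.le
      have h2 : 0 < m * A - i * D := by nlinarith
      rw [abs_of_pos h2]
      have : (k + 1) * A - i * D = (k * A - i * D) + A := by ring
      rw [this, habsΔA]
      nlinarith
  · intro h m hm
    rw [habsΔ, habsΔA] at h
    rcases le_or_gt m k with hmk | hmk
    · have h1 : 0 ≤ (k - m) * A := mul_nonneg (by linarith) hA.le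
      have h2 : m * A - i * D < 0 := by nlinarith
      rw [abs_of_neg h2, habsΔ]
      nlinarith
    · have h1 : 0 ≤ (m - k - 1) * A := mul_nonneg (by linarith) hA.le
      have h2 : 0 < m * A - i * D := by nlinarith
      rw [abs_of_pos h2, habsΔ]
      nlinarith
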